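/- Let n ≥ 1, let w : Fin n → Fin n → EReal have all entries in {−1, 0, 1, ⊤}, and let w_c be a canonical graph of w with d_{w_c}(p,q) = d_w(p,q) for all p,q; write d = d_{w_c} and t*(p,q) = halve(d(p,q)). Fix i, j with d(i,j) finite (an integer). Then d(i,j) is odd if and only if min over k ∈ Fin n of max(t*(i,k), x⁺(k,j)) equals t*(i,j) − 1, or min over k ∈ Fin n of max(t*(i,k), x⁻(k,j)) equals t*(i,j). -/

import Mathlib

open scoped BigOperators

namespace MinMaxAPSP

/-- `p` is a walk from `i` to `j` with `ℓ` hops in the graph with weight matrix `w`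
(an ordered pair is an edge iff its weight is not `⊤`). -/
def IsWalk {n : ℕ} (w : Fin n → Fin n → EReal) (i j : Fin n) (ℓ : ℕ)
    (p : Fin (ℓ+1) → Fin n) : Prop :=
  p 0 = i ∧ p (Fin.last ℓ) = j ∧ ∀ k : Fin ℓ, w (p k.castSucc) (p k.succ) ≠ ⊤

/-- The weight of a walk with `ℓ` hops. -/
noncomputable def walkWeight {n : ℕ} (w : Fin n → Fin n → EReal) (ℓ : ℕ)
    (p : Fin (ℓ+1) → Fin n) : EReal :=
  ∑ k : Fin ℓ, w (p k.castSucc) (p k.succ)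

/-- The distance from `i` to `j`: the infimum of the weights of all walks from `i` to `j`
(`⊤` if there is no walk). -/
noncomputable def dist {n : ℕ} (w : Fin n → Fin n → EReal) (i j : Fin n) : EReal :=
  sInf {x : EReal | ∃ ℓ, ∃ p : Fin (ℓ+1) → Fin n, IsWalk w i j ℓ p ∧ walkWeight w ℓ p = x}

/-- The infimum of the weights of all walks from `i` to `j` with at most `δ` hops
(`⊤` if there is no such walk). -/
noncomputable def distLE {n : ℕ} (w : Fin n → Fin n → EReal) (δ : ℕ) (i j : Fin n) : EReal :=
  sInf {x : EReal | ∃ ℓ ≤ δ, ∃ p : Fin (ℓ+1) → Fin n, IsWalk w i j ℓ p ∧ walkWeight w ℓ p = x}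

/-- `w` is `δ`-regular. -/
def IsRegular {n : ℕ} (w : Fin n → Fin n → EReal) (δ : ℕ) : Prop :=
  ∀ i j : Fin n,
    (dist w i j ≠ ⊥ → dist w i j = distLE w δ i j) ∧
    (dist w i j = ⊥ →
      ∃ ℓ ≤ δ, ∃ p : Fin (ℓ+1) → Fin n, IsWalk w i j ℓ p ∧ walkWeight w ℓ p < 0)

/-- All entries of `w` are in `{-1, 0, 1, ⊤}`. -/
def EntriesInMinusOneZeroOneTop {n : ℕ} (w : Fin n → Fin n → EReal) : Prop :=
  ∀ i j, w i j = -1 ∨ w i j = 0 ∨ w i j = 1 ∨ w i j = ⊤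

/-- `p` is a shortest walk from `i` to `j` under `w`. -/
def IsShortestWalk {n : ℕ} (w : Fin n → Fin n → EReal) (i j : Fin n) (ℓ : ℕ)
    (p : Fin (ℓ+1) → Fin n) : Prop :=
  IsWalk w i j ℓ p ∧ walkWeight w ℓ p = dist w i j

/-- `wc` is a canonical graph of `w`. -/
def IsCanonical {n : ℕ} (w wc : Fin n → Fin n → EReal) : Prop :=
  EntriesInMinusOneZeroOneTop wc ∧
  ∀ (i j : Fin n) (ℓ : ℕ) (p : Fin (ℓ+1) → Fin n), IsShortestWalk w i j ℓ p →
    ∃ ℓ' ≤ ℓ, ∃ p' : Fin (ℓ'+1) → Fin n,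
      IsShortestWalk wc i j ℓ' p' ∧
      walkWeight wc ℓ' p' = walkWeight w ℓ p ∧
      (ℓ' = 1 ∨ ∀ k : Fin ℓ', wc (p' k.castSucc) (p' k.succ) ≠ 0)

/-- `halve x = ⌈x/2⌉` for finite `x`, and `halve (⊥) = ⊥`, `halve (⊤) = ⊤`. -/
noncomputable def halve (x : EReal) : EReal :=
  if x = ⊤ then ⊤ else if x = ⊥ then ⊥ else (((⌈x.toReal / 2⌉ : ℤ) : ℝ) : EReal)


lemma coe_int_sum {α : Type*} (s : Finset α) (f : α → ℤ) :
    ((((∑ a ∈ s, f a : ℤ) : ℝ)) : EReal) = ∑ a ∈ s, (((f a : ℤ):ℝ) : EReal) := by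
  classical
  induction s using Finset.induction with
  | empty => simp
  | @insert a s ha ih => rw [Finset.sum_insert ha, Finset.sum_insert ha, ← ih]; push_cast; rfl

lemma walkWeight_int {n : ℕ} {w : Fin n → Fin n → EReal}
    (hw : EntriesInMinusOneZeroOneTop w) {i j : Fin n} {ℓ : ℕ}
    {p : Fin (ℓ+1) → Fin n} (hp : IsWalk w i j ℓ p) :
    ∃ z : ℤ, walkWeight w ℓ p = ((z:ℝ):EReal) := by
  have h : ∀ k : Fin ℓ, ∃ z : ℤ, w (p k.castSucc) (p k.succ) = ((z:ℝ):EReal) := by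
    intro k
    rcases hw (p k.castSucc) (p k.succ) with h | h | h | h
    · exact ⟨-1, by rw [h]; norm_num⟩
    · exact ⟨0, by rw [h]; norm_num⟩
    · exact ⟨1, by rw [h]; norm_num⟩
    · exact absurd h (hp.2.2 k)
  choose f hf using h
  refine ⟨∑ k : Fin ℓ, f k, ?_⟩
  rw [walkWeight, coe_int_sum]
  exact Finset.sum_congr rfl fun k _ => hf k

lemma dist_attained {n : ℕ} {w : Fin n → Fin n → EReal}
    (hw : EntriesInMinusOneZeroOneTop w) {i j : Fin n}
    (ht : dist w i j ≠ ⊤) (hb : dist w i j ≠ ⊥) :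
    ∃ ℓ, ∃ p : Fin (ℓ+1) → Fin n, IsWalk w i j ℓ p ∧ walkWeight w ℓ p = dist w i j := by
  set S := {x : EReal | ∃ ℓ, ∃ p : Fin (ℓ+1) → Fin n, IsWalk w i j ℓ p ∧ walkWeight w ℓ p = x}
    with hS
  obtain ⟨b, hb'⟩ : ∃ b : ℝ, dist w i j = ((b:ℝ):EReal) :=
    ⟨(dist w i j).toReal, (EReal.coe_toReal ht hb).symm⟩
  -- every member of S corresponding to (b ≤ z < b+1) equals ⌈b⌉
  have hmem : ∀ x ∈ S, ((b:ℝ):EReal) ≤ x := by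
    intro x hx
    rw [← hb']
    exact sInf_le hx
  have hint : ∀ x ∈ S, ∃ z : ℤ, x = ((z:ℝ):EReal) := by
    rintro x ⟨ℓ, p, hp, hwp⟩
    obtain ⟨z, hz⟩ := walkWeight_int hw hp
    exact ⟨z, hwp ▸ hz⟩
  -- there is a member < b+1
  have hlt : ∃ x ∈ S, x < ((b+1:ℝ):EReal) := by
    by_contra hcon
    push_neg at hcon
    have : ((b+1:ℝ):EReal) ≤ dist w i j := le_sInf fun x hx => hcon x hx
    rw [hb', EReal.coe_le_coe_iff] at this
    linarith
  obtain ⟨x, hxS, hxlt⟩ := hlt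
  obtain ⟨z, rfl⟩ := hint x hxS
  have h1 : b ≤ (z:ℝ) := by exact_mod_cast hmem _ hxS
  have h2 : (z:ℝ) < b + 1 := by exact_mod_cast hxlt
  have hz : z = ⌈b⌉ := by
    have := Int.ceil_le.mpr h1
    have h3 : (z:ℝ) < (⌈b⌉:ℝ) + 1 := lt_of_lt_of_le h2 (by
      have := Int.le_ceil b; linarith)
    have h4 : z < ⌈b⌉ + 1 := by exact_mod_cast h3
    omega
  -- show dist = z
  have hge : ((z:ℝ):EReal) ≤ dist w i j := by
    apply le_sInf
    intro x hx
    obtain ⟨z', rfl⟩ := hint x hx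
    have h1' : b ≤ (z':ℝ) := by exact_mod_cast hmem _ hx
    have : ⌈b⌉ ≤ z' := Int.ceil_le.mpr h1'
    rw [EReal.coe_le_coe_iff]
    exact_mod_cast hz ▸ this
  have heq : dist w i j = ((z:ℝ):EReal) := le_antisymm (sInf_le hxS) hge
  obtain ⟨ℓ, p, hp, hwp⟩ := hxS
  exact ⟨ℓ, p, hp, by rw [hwp, heq]⟩

lemma walkWeight_succ {n : ℕ} (w : Fin n → Fin n → EReal) (ℓ : ℕ)
    (p : Fin (ℓ+1+1) → Fin n) :
    walkWeight w (ℓ+1) p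
      = walkWeight w ℓ (fun k => p k.castSucc)
        + w (p (Fin.last ℓ).castSucc) (p (Fin.last (ℓ+1))) := by
  rw [walkWeight, Fin.sum_univ_castSucc]
  congr 1

lemma snoc_walk {n : ℕ} (w : Fin n → Fin n → EReal) (i k j : Fin n) (ℓ : ℕ)
    (p : Fin (ℓ+1) → Fin n) (hp : IsWalk w i k ℓ p) (he : w k j ≠ ⊤) :
    IsWalk w i j (ℓ+1) (Fin.snoc p j) ∧
      walkWeight w (ℓ+1) (Fin.snoc p j) = walkWeight w ℓ p + w k j := by
  obtain ⟨h0, hl, hedges⟩ := hp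
  set q : Fin (ℓ+2) → Fin n := Fin.snoc p j with hq
  have hcs : ∀ x : Fin (ℓ+1), q x.castSucc = p x := fun x => by simp [hq]
  have hlast : q (Fin.last (ℓ+1)) = j := by simp [hq]
  have hwalk : IsWalk w i j (ℓ+1) q := by
    refine ⟨?_, hlast, ?_⟩
    · have := hcs 0; simpa [h0] using this
    · intro m
      induction m using Fin.lastCases with
      | last =>
          rw [Fin.succ_last, hlast, hcs, hl]
          exact he
      | cast m' =>
          have h1 : (m'.castSucc).succ = (m'.succ).castSucc := Fin.succ_castSucc m'
          rw [h1, hcs, hcs]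
          exact hedges m'
  refine ⟨hwalk, ?_⟩
  have := walkWeight_succ w ℓ q
  rw [this, hlast, hcs (Fin.last ℓ), hl]
  congr 1
  rw [walkWeight]
  exact Finset.sum_congr rfl fun x _ => by rw [hcs, hcs]

lemma dist_le_edge {n : ℕ} {w : Fin n → Fin n → EReal} (i k j : Fin n) (c : ℝ)
    (hkj : w k j = (c : EReal)) :
    dist w i j ≤ dist w i k + (c:EReal) := by
  rw [← (EReal.sub_le_iff_le_add (Or.inl (EReal.coe_ne_bot c)) (Or.inl (EReal.coe_ne_top c)))]
  apply le_sInf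
  rintro x ⟨ℓ, p, hp, rfl⟩
  apply EReal.sub_le_of_le_add
  have hne : w k j ≠ ⊤ := by rw [hkj]; exact EReal.coe_ne_top c
  obtain ⟨hwalk, hweight⟩ := snoc_walk w i k j ℓ p hp hne
  have : dist w i j ≤ walkWeight w (ℓ+1) (Fin.snoc p j) :=
    sInf_le ⟨ℓ+1, Fin.snoc p j, hwalk, rfl⟩
  rw [hweight, hkj] at this
  exact this

lemma dist_le_walkWeight {n : ℕ} {w : Fin n → Fin n → EReal} {i j : Fin n} {ℓ : ℕ}
    {p : Fin (ℓ+1) → Fin n} (hp : IsWalk w i j ℓ p) :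
    dist w i j ≤ walkWeight w ℓ p :=
  sInf_le ⟨ℓ, p, hp, rfl⟩

lemma halve_coe_int (z : ℤ) : halve ((z:ℝ):EReal) = ((⌈(z:ℝ)/2⌉:ℝ):EReal) := by
  rw [halve, if_neg (EReal.coe_ne_top _), if_neg (EReal.coe_ne_bot _), EReal.toReal_coe]

lemma halve_odd (m : ℤ) : halve (((2*m+1:ℤ):ℝ):EReal) = (((m+1:ℤ):ℝ):EReal) := by
  rw [halve_coe_int]
  have h : ⌈((2*m+1:ℤ):ℝ)/2⌉ = m+1 := by
    rw [Int.ceil_eq_iff]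
    refine ⟨?_, ?_⟩ <;> push_cast <;> linarith
  rw [h]

lemma halve_even (m : ℤ) : halve (((2*m:ℤ):ℝ):EReal) = (((m:ℤ):ℝ):EReal) := by
  rw [halve_coe_int]
  have h : ⌈((2*m:ℤ):ℝ)/2⌉ = m := by
    rw [Int.ceil_eq_iff]
    refine ⟨?_, ?_⟩ <;> push_cast <;> linarith
  rw [h]

lemma halve_mono {x y : EReal} (h : x ≤ y) : halve x ≤ halve y := by
  by_cases hy : y = ⊤
  · simp [halve, hy]
  by_cases hx : x = ⊥
  · simp [halve, hx]
  have hx' : x ≠ ⊤ := fun hh => hy (top_le_iff.mp (hh ▸ h))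
  have hy' : y ≠ ⊥ := fun hh => hx (le_bot_iff.mp (hh ▸ h))
  rw [halve, if_neg hx', if_neg hx, halve, if_neg hy, if_neg hy']
  rw [EReal.coe_le_coe_iff]
  have := EReal.toReal_le_toReal h hx hy
  exact_mod_cast Int.ceil_le_ceil (by linarith)

lemma dist_int {n : ℕ} {w : Fin n → Fin n → EReal}
    (hw : EntriesInMinusOneZeroOneTop w) {i j : Fin n}
    (ht : dist w i j ≠ ⊤) (hb : dist w i j ≠ ⊥) :
    ∃ z : ℤ, dist w i j = ((z:ℝ):EReal) := by
  obtain ⟨ℓ, p, hp, hwt⟩ := dist_attained hw ht hb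
  obtain ⟨z, hz⟩ := walkWeight_int hw hp
  exact ⟨z, hwt ▸ hz⟩

lemma prefix_walk {n : ℕ} (w : Fin n → Fin n → EReal) (i j : Fin n) (ℓ : ℕ)
    (p : Fin (ℓ+1+1) → Fin n) (hp : IsWalk w i j (ℓ+1) p) :
    IsWalk w i (p (Fin.last ℓ).castSucc) ℓ (fun k => p k.castSucc) := by
  obtain ⟨h0, hl, he⟩ := hp
  refine ⟨by simpa using h0, rfl, fun k => ?_⟩
  have := he k.castSucc
  rw [Fin.succ_castSucc] at this; exact this

lemma le_shift' (x : EReal) (a c : ℝ) (h : (a:EReal) ≤ x + (c:EReal)) :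
    ((a - c:ℝ):EReal) ≤ x := by
  induction x with
  | bot => simp at h
  | coe r =>
      rw [← EReal.coe_add, EReal.coe_le_coe_iff] at h
      rw [EReal.coe_le_coe_iff]; linarith
  | top => exact le_top

lemma eq_shift (x : EReal) (a c : ℝ) (h : x + (c:EReal) = (a:EReal)) :
    x = ((a - c:ℝ):EReal) := by
  induction x with
  | bot => simp at h
  | coe r =>
      rw [← EReal.coe_add, EReal.coe_eq_coe_iff] at h
      rw [EReal.coe_eq_coe_iff]; linarith
  | top => simp at h

lemma inf_ge {n : ℕ} (wc : Fin n → Fin n → EReal) (i j : Fin n)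
    (Dz : ℤ) (hD : dist wc i j = ((Dz:ℝ):EReal)) (c : EReal) (cz : ℤ)
    (hcz : c = ((cz:ℝ):EReal)) (b : ℤ)
    (hhb : ((b:ℝ):EReal) ≤ halve ((((Dz - cz):ℤ):ℝ):EReal)) (k : Fin n) :
    ((b:ℝ):EReal) ≤ max (halve (dist wc i k)) (if wc k j = c then (⊥:EReal) else ⊤) := by
  split_ifs with h
  · refine le_trans ?_ (le_max_left _ _)
    refine le_trans hhb (halve_mono ?_)
    have h6 := dist_le_edge (w := wc) i k j (cz:ℝ) (by rw [h, hcz])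
    rw [hD] at h6
    have h7 := le_shift' _ _ _ h6
    rw [show ((Dz - cz:ℤ):ℝ) = (Dz:ℝ) - (cz:ℝ) by push_cast; ring]
    exact h7
  · exact le_trans le_top (le_max_right _ _)

/-- parity characterization via the two target-(min,max)-products. -/
theorem stmt7 (n : ℕ) (hn : 1 ≤ n) (w wc : Fin n → Fin n → EReal)
    (hw : EntriesInMinusOneZeroOneTop w)
    (hc : IsCanonical w wc) (hdc : ∀ p q : Fin n, dist wc p q = dist w p q)
    (i j : Fin n) (hfin : dist wc i j ≠ ⊤ ∧ dist wc i j ≠ ⊥) :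
    (∃ m : ℤ, dist wc i j = (((2*m+1 : ℤ) : ℝ) : EReal)) ↔
      ((⨅ k : Fin n, max (halve (dist wc i k)) (if wc k j = 1 then (⊥ : EReal) else ⊤))
          = halve (dist wc i j) - 1 ∨
        (⨅ k : Fin n, max (halve (dist wc i k)) (if wc k j = -1 then (⊥ : EReal) else ⊤))
          = halve (dist wc i j)) := by
  have hwc := hc.1
  obtain ⟨Dz, hD⟩ := dist_int hwc hfin.1 hfin.2
  constructor
  · rintro ⟨m, hDodd⟩
    have hDz : Dz = 2*m+1 := by
      rw [hD] at hDodd; exact_mod_cast hDodd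
    -- find a shortest walk under w
    have hft : dist w i j ≠ ⊤ := by rw [← hdc i j]; exact hfin.1
    have hfb : dist w i j ≠ ⊥ := by rw [← hdc i j]; exact hfin.2
    obtain ⟨ℓ, p, hp, hwt⟩ := dist_attained hw hft hfb
    obtain ⟨ℓ', hle, p', hsw', hww, hor⟩ := hc.2 i j ℓ p ⟨hp, hwt⟩
    have hD' : walkWeight wc ℓ' p' = ((Dz:ℝ):EReal) := by rw [hsw'.2, hD]
    cases ℓ' with
    | zero =>
        exfalso
        have h0 : walkWeight wc 0 p' = 0 := by simp [walkWeight]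
        rw [h0] at hD'
        have : (0:ℤ) = Dz := by exact_mod_cast hD'
        omega
    | succ ℓ'' =>
        set k := p' (Fin.last ℓ'').castSucc with hk
        have hq := prefix_walk wc i j ℓ'' p' hsw'.1
        have hj : p' (Fin.last (ℓ''+1)) = j := hsw'.1.2.1
        have hsplit := walkWeight_succ wc ℓ'' p'
        rw [hj] at hsplit
        have hedge : wc k j ≠ ⊤ := by
          have := hsw'.1.2.2 (Fin.last ℓ'')
          rwa [Fin.succ_last, hj] at this
        have hne0 : wc k j ≠ 0 := by
          rcases hor with h1 | hnz
          · have hℓ : ℓ'' = 0 := by omega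
            subst hℓ
            intro hzero
            have hpre0 : walkWeight wc 0 (fun x => p' x.castSucc) = 0 := by simp [walkWeight]
            rw [hpre0, hzero] at hsplit
            rw [hsplit] at hD'
            have h9 : (0:EReal) = ((Dz:ℝ):EReal) := by simpa using hD'
            have : (0:ℤ) = Dz := by exact_mod_cast h9
            omega
          · have := hnz (Fin.last ℓ'')
            rwa [Fin.succ_last, hj] at this
        -- determine the sign of the last edge
        have hkey : ∀ cz : ℤ, wc k j = ((cz:ℝ):EReal) →
            dist wc i k = (((Dz - cz:ℤ):ℝ):EReal) := by
          intro cz hεc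
          have h5 : walkWeight wc ℓ'' (fun x => p' x.castSucc) + ((cz:ℝ):EReal)
              = ((Dz:ℝ):EReal) := by rw [← hεc, ← hsplit]; exact hD'
          have hpre := eq_shift _ _ _ h5
          have hle1 : dist wc i k ≤ (((Dz:ℝ) - (cz:ℝ):ℝ):EReal) := hpre ▸ dist_le_walkWeight hq
          have h6 := dist_le_edge (w := wc) i k j (cz:ℝ) hεc
          rw [hD] at h6
          have hge1 := le_shift' _ _ _ h6
          rw [show ((Dz - cz:ℤ):ℝ) = (Dz:ℝ) - (cz:ℝ) by push_cast; ring]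
          exact le_antisymm hle1 hge1
        rcases hwc k j with hε | hε | hε | hε
        · -- last edge = -1 : right disjunct
          right
          have hdik : dist wc i k = (((Dz + 1:ℤ):ℝ):EReal) := by
            have := hkey (-1) (by rw [hε]; norm_num)
            rwa [show Dz - (-1) = Dz + 1 by ring] at this
          have hhd : halve (dist wc i j) = (((m+1:ℤ):ℝ):EReal) := by
            rw [hD, show Dz = 2*m+1 from hDz]; exact halve_odd m
          have hhk : halve (dist wc i k) = (((m+1:ℤ):ℝ):EReal) := by
            rw [hdik, show Dz + 1 = 2*(m+1) by omega]; exact halve_even (m+1)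
          rw [hhd]
          apply le_antisymm
          · refine iInf_le_of_le k (le_of_eq ?_)
            simp [hε, hhk]
          · refine le_iInf fun k' => inf_ge wc i j Dz hD (-1) (-1) (by norm_num) (m+1)
              (le_of_eq ?_) k'
            rw [show Dz - (-1) = 2*(m+1) by omega, halve_even]
        · exact absurd hε hne0
        · -- last edge = 1 : left disjunct
          left
          have hdik : dist wc i k = (((Dz - 1:ℤ):ℝ):EReal) := hkey 1 (by rw [hε]; norm_num)
          have hhd : halve (dist wc i j) = (((m+1:ℤ):ℝ):EReal) := by
            rw [hD, show Dz = 2*m+1 from hDz]; exact halve_odd m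
          have hhk : halve (dist wc i k) = (((m:ℤ):ℝ):EReal) := by
            rw [hdik, show Dz - 1 = 2*m by omega]; exact halve_even m
          have hsub : (((m+1:ℤ):ℝ):EReal) - 1 = (((m:ℤ):ℝ):EReal) := by
            rw [show (1:EReal) = ((1:ℝ):EReal) from rfl, ← EReal.coe_sub]
            norm_cast
            push_cast
            ring
          rw [hhd, hsub]
          apply le_antisymm
          · refine iInf_le_of_le k (le_of_eq ?_)
            simp [hε, hhk]
          · refine le_iInf fun k' => inf_ge wc i j Dz hD 1 1 (by norm_num) m
              (le_of_eq ?_) k'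
            rw [show Dz - 1 = 2*m by omega, halve_even]
        · exact absurd hε hedge
  · intro hRHS
    rcases Int.even_or_odd Dz with ⟨m, hm⟩ | ⟨m, hm⟩
    · -- even: contradiction with either disjunct
      exfalso
      have hDz : Dz = 2*m := by omega
      have hhd : halve (dist wc i j) = (((m:ℤ):ℝ):EReal) := by
        rw [hD, hDz]; exact halve_even m
      rcases hRHS with hL | hR
      · have hge : (((m:ℤ):ℝ):EReal) ≤
            ⨅ k : Fin n, max (halve (dist wc i k)) (if wc k j = 1 then (⊥:EReal) else ⊤) := by
          refine le_iInf fun k' => inf_ge wc i j Dz hD 1 1 (by norm_num) m (le_of_eq ?_) k'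
          rw [show Dz - 1 = 2*(m-1)+1 by omega, halve_odd]
          norm_cast
          omega
        rw [hL, hhd] at hge
        have hsub : (((m:ℤ):ℝ):EReal) - 1 = (((m-1:ℤ):ℝ):EReal) := by
          rw [show (1:EReal) = ((1:ℝ):EReal) from rfl, ← EReal.coe_sub]
          norm_cast
        rw [hsub] at hge
        have : (m:ℝ) ≤ ((m-1:ℤ):ℝ) := by exact_mod_cast hge
        push_cast at this
        linarith
      · have hge : (((m+1:ℤ):ℝ):EReal) ≤
            ⨅ k : Fin n, max (halve (dist wc i k)) (if wc k j = -1 then (⊥:EReal) else ⊤) := by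
          refine le_iInf fun k' => inf_ge wc i j Dz hD (-1) (-1) (by norm_num) (m+1)
            (le_of_eq ?_) k'
          rw [show Dz - (-1) = 2*m+1 by omega, halve_odd]
        rw [hR, hhd] at hge
        have : ((m+1:ℤ):ℝ) ≤ (m:ℝ) := by exact_mod_cast hge
        push_cast at this
        linarith
    · exact ⟨m, by rw [hD, hm]⟩

end MinMaxAPSP
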